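/- Let F : ℝ^{dn} → ℝ ∪ {+∞} be proper, closed, convex with the growth condition ‖u*‖₂ ≤ C(‖u‖₂+1) for all u* ∈ ∂F(u). Then the sequences generated by the ADMM-like algorithm with geometrically increasing penalty η^{(k)} = η^{(0)}σ^k (σ > 1) converge: (u^{(k)}, v^{(k)}, w^{(k)}) → (û, û, û) for some û, and (q₁^{(k)}, q₂^{(k)}) → (0, 0). -/

import Mathlib

open Filter Topology

/-- Grouped ℓ⁰ semi-norm. -/
noncomputable def l0 {n d : ℕ} (w : Fin n → Fin d → ℝ) : ℝ :=
  Set.ncard {i : Fin n | w i ≠ 0}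

private lemma l0_nonneg' {n d : ℕ} (w : Fin n → Fin d → ℝ) : 0 ≤ l0 w :=
  Nat.cast_nonneg _

private lemma l0_le_n' {n d : ℕ} (w : Fin n → Fin d → ℝ) : l0 w ≤ n := by
  have h := Set.ncard_le_ncard (Set.subset_univ {i : Fin n | w i ≠ 0}) Set.finite_univ
  simp only [Set.ncard_univ, Nat.card_eq_fintype_card, Fintype.card_fin] at h
  unfold l0
  exact_mod_cast h

private lemma le_zero_of_le_mul' {c M : ℝ} (h : ∀ t : ℝ, 0 < t → t ≤ 1 → c ≤ t * M) :
    c ≤ 0 := by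
  by_contra hc
  push_neg at hc
  have hM : 0 < M := lt_of_lt_of_le hc (by simpa using h 1 one_pos le_rfl)
  have ht := h (min 1 (c / (2 * M))) (by positivity) (min_le_left _ _)
  have h2 : min 1 (c/(2*M)) * M ≤ (c/(2*M)) * M :=
    mul_le_mul_of_nonneg_right (min_le_right _ _) hM.le
  have hcm : (c/(2*M)) * M = c/2 := by field_simp
  nlinarith

private lemma geom_sum_le' {ρ : ℝ} (h0 : 0 ≤ ρ) (h1 : ρ < 1) (i : ℕ) :
    ∑ l ∈ Finset.range i, ρ^l ≤ (1-ρ)⁻¹ := by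
  rw [geom_sum_eq (ne_of_lt h1) i]
  have h2 : 0 < 1 - ρ := by linarith
  have h3 : 0 ≤ ρ ^ i := pow_nonneg h0 i
  have e : (ρ^i-1)/(ρ-1) = (1-ρ^i)/(1-ρ) := by
    rw [← neg_div_neg_eq]; ring_nf
  rw [e, ← one_div]
  gcongr
  linarith

private lemma le_of_sq_le_sq' {a b : ℝ} (h : a^2 ≤ b^2) (ha : 0 ≤ a) (hb : 0 ≤ b) :
    a ≤ b := by
  calc a = Real.sqrt (a^2) := (Real.sqrt_sq ha).symm
    _ ≤ Real.sqrt (b^2) := Real.sqrt_le_sqrt h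
    _ = b := Real.sqrt_sq hb

set_option maxHeartbeats 2000000 in
/-- Convergence of the ADMM-like algorithm for a proper, closed, convex F with
subgradient growth condition (Theorem 4.1). -/
theorem stmt12 {N n d : ℕ}
    (F : EuclideanSpace ℝ (Fin N) → EReal)
    (hbot : ∀ x, F x ≠ ⊥) (hproper : ∃ x, F x ≠ ⊤)
    (hlsc : LowerSemicontinuous F)
    (hconv : ∀ (x y : EuclideanSpace ℝ (Fin N)) (t : ℝ), 0 ≤ t → t ≤ 1 →
      F (t • x + (1 - t) • y) ≤ ((t : EReal)) * F x + (((1 - t : ℝ) : EReal)) * F y)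
    (hgrowth : ∃ C : ℝ, ∀ (x xs : EuclideanSpace ℝ (Fin N)),
      (∀ v, F x + (((inner ℝ xs (v - x) : ℝ)) : EReal) ≤ F v) → ‖xs‖ ≤ C * (‖x‖ + 1))
    (D1 D2 : EuclideanSpace ℝ (Fin N) →ₗ[ℝ] (Fin n → Fin d → ℝ))
    (lam η₀ σ : ℝ) (hlam : 0 < lam) (hη₀ : 0 < η₀) (hσ : 1 < σ)
    (η : ℕ → ℝ) (hη : ∀ k, η k = η₀ * σ ^ k)
    (u v w q1 q2 : ℕ → EuclideanSpace ℝ (Fin N))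
    (hu : ∀ k, ∀ x : EuclideanSpace ℝ (Fin N),
      F (u (k + 1)) + ((η k / 2 * (‖u (k + 1) - v k + q1 k‖ ^ 2
          + ‖u (k + 1) - w k + q2 k‖ ^ 2) : ℝ) : EReal) ≤
        F x + ((η k / 2 * (‖x - v k + q1 k‖ ^ 2 + ‖x - w k + q2 k‖ ^ 2) : ℝ) : EReal))
    (hv : ∀ k, ∀ x : EuclideanSpace ℝ (Fin N),
      lam * l0 (D1 (v (k + 1))) + η k / 2 * ‖u (k + 1) - v (k + 1) + q1 k‖ ^ 2 ≤
        lam * l0 (D1 x) + η k / 2 * ‖u (k + 1) - x + q1 k‖ ^ 2)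
    (hw : ∀ k, ∀ x : EuclideanSpace ℝ (Fin N),
      lam * l0 (D2 (w (k + 1))) + η k / 2 * ‖u (k + 1) - w (k + 1) + q2 k‖ ^ 2 ≤
        lam * l0 (D2 x) + η k / 2 * ‖u (k + 1) - x + q2 k‖ ^ 2)
    (hq1 : ∀ k, q1 (k + 1) = q1 k + u (k + 1) - v (k + 1))
    (hq2 : ∀ k, q2 (k + 1) = q2 k + u (k + 1) - w (k + 1)) :
    ∃ uh : EuclideanSpace ℝ (Fin N),
      Tendsto u atTop (nhds uh) ∧ Tendsto v atTop (nhds uh) ∧ Tendsto w atTop (nhds uh) ∧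
        Tendsto q1 atTop (nhds 0) ∧ Tendsto q2 atTop (nhds 0) := by
  obtain ⟨C, hC⟩ := hgrowth
  obtain ⟨x₀, hx₀⟩ := hproper
  have ηpos : ∀ k, 0 < η k := fun k => by rw [hη]; positivity
  have hreal : ∀ x, F x ≠ ⊤ → ∃ a : ℝ, F x = (a : EReal) :=
    fun x hx => ⟨(F x).toReal, (EReal.coe_toReal hx (hbot x)).symm⟩
  -- F (u (k+1)) is finite
  have hFfin : ∀ k, F (u (k+1)) ≠ ⊤ := by
    intro k htop
    obtain ⟨b, hb⟩ := hreal x₀ hx₀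
    have h := hu k x₀
    rw [htop, hb, EReal.top_add_coe, ← EReal.coe_add] at h
    exact (EReal.coe_lt_top _).not_ge h
  -- subgradient inequality at u (k+1)
  set g : ℕ → EuclideanSpace ℝ (Fin N) :=
    fun k => (-(η k)) • ((u (k+1) - v k + q1 k) + (u (k+1) - w k + q2 k)) with hg
  have key : ∀ k z, F (u (k+1)) + (((inner ℝ (g k) (z - u (k+1)) : ℝ)) : EReal) ≤ F z := by
    intro k z
    obtain ⟨a, ha⟩ := hreal _ (hFfin k)
    by_cases hz : F z = ⊤
    · rw [hz]; exact le_top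
    obtain ⟨b, hb⟩ := hreal _ hz
    set u' := u (k+1) with hu'
    set r := u' - v k + q1 k with hr
    set s := u' - w k + q2 k with hs
    set h0 := z - u' with hh0
    have hginner : (inner ℝ (g k) h0 : ℝ) = -(η k) * (inner ℝ r h0 + inner ℝ s h0) := by
      rw [hg]
      rw [real_inner_smul_left, inner_add_left]
    rw [ha, hb, hginner, ← EReal.coe_add, EReal.coe_le_coe_iff]
    have main : a - b - η k * ((inner ℝ r h0 : ℝ) + (inner ℝ s h0 : ℝ)) ≤ 0 := by
      apply le_zero_of_le_mul' (M := η k * ‖h0‖^2)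
      intro t ht0 ht1
      have hmin := hu k (u' + t • h0)
      have hconvx := hconv z u' t ht0.le ht1
      have hzt : t • z + (1 - t) • u' = u' + t • h0 := by
        rw [hh0, smul_sub, sub_smul, one_smul]; abel
      rw [hzt, ha, hb] at hconvx
      have hconvx' : F (u' + t • h0) ≤ ((t*b + (1-t)*a : ℝ) : EReal) := by
        rw [EReal.coe_add, EReal.coe_mul, EReal.coe_mul] at *
        exact hconvx
      have er : u' + t • h0 - v k + q1 k = r + t • h0 := by rw [hr]; abel
      have es : u' + t • h0 - w k + q2 k = s + t • h0 := by rw [hs]; abel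
      rw [ha, er, es] at hmin
      have hmin2 : ((a : EReal) + ((η k / 2 * (‖r‖ ^ 2 + ‖s‖ ^ 2) : ℝ) : EReal)) ≤
          (((t*b + (1-t)*a : ℝ) : EReal) + ((η k / 2 * (‖r + t • h0‖ ^ 2 + ‖s + t • h0‖ ^ 2) : ℝ) : EReal)) :=
        le_trans hmin (add_le_add_left hconvx' _)
      rw [← EReal.coe_add, ← EReal.coe_add, EReal.coe_le_coe_iff] at hmin2
      have e1 : ‖r + t • h0‖^2 = ‖r‖^2 + 2*(t*(inner ℝ r h0 : ℝ)) + t^2*‖h0‖^2 := by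
        rw [norm_add_sq_real, real_inner_smul_right, norm_smul]
        simp [mul_pow, sq_abs]
      have e2 : ‖s + t • h0‖^2 = ‖s‖^2 + 2*(t*(inner ℝ s h0 : ℝ)) + t^2*‖h0‖^2 := by
        rw [norm_add_sq_real, real_inner_smul_right, norm_smul]
        simp [mul_pow, sq_abs]
      rw [e1, e2] at hmin2
      have ht' : t * (a - b - η k * ((inner ℝ r h0 : ℝ) + (inner ℝ s h0 : ℝ)) - t * (η k * ‖h0‖^2)) ≤ t * 0 := by
        nlinarith [hmin2]
      linarith [le_of_mul_le_mul_left ht' ht0]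
    linarith [main]
  -- growth bound
  have hCb : ∀ k, ‖g k‖ ≤ C * (‖u (k+1)‖ + 1) := fun k => hC (u (k+1)) (g k) (key k)
  have hgnorm : ∀ k, ‖g k‖ = η k * ‖(u (k+1) - v k + q1 k) + (u (k+1) - w k + q2 k)‖ := by
    intro k
    rw [hg, norm_smul, Real.norm_eq_abs, abs_neg, abs_of_pos (ηpos k)]
  have hC0 : 0 ≤ C := by
    have h1 := hCb 0
    nlinarith [norm_nonneg (g 0), norm_nonneg (u 1)]
  -- q bounds
  have hq1bd : ∀ k, ‖q1 (k+1)‖^2 ≤ 2*lam*n / η k := by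
    intro k
    have h := hv k (u (k+1) + q1 k)
    have e1 : u (k + 1) - v (k + 1) + q1 k = q1 (k+1) := by rw [hq1 k]; abel
    have e0 : u (k + 1) - (u (k+1) + q1 k) + q1 k = 0 := by abel
    rw [e1, e0, norm_zero] at h
    have h1 := l0_nonneg' (D1 (v (k + 1)))
    have h2 := l0_le_n' (D1 (u (k+1) + q1 k))
    rw [le_div_iff₀ (ηpos k)]
    nlinarith [mul_le_mul_of_nonneg_left h2 hlam.le, mul_nonneg hlam.le h1]
  have hq2bd : ∀ k, ‖q2 (k+1)‖^2 ≤ 2*lam*n / η k := by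
    intro k
    have h := hw k (u (k+1) + q2 k)
    have e1 : u (k + 1) - w (k + 1) + q2 k = q2 (k+1) := by rw [hq2 k]; abel
    have e0 : u (k + 1) - (u (k+1) + q2 k) + q2 k = 0 := by abel
    rw [e1, e0, norm_zero] at h
    have h1 := l0_nonneg' (D2 (w (k + 1)))
    have h2 := l0_le_n' (D2 (u (k+1) + q2 k))
    rw [le_div_iff₀ (ηpos k)]
    nlinarith [mul_le_mul_of_nonneg_left h2 hlam.le, mul_nonneg hlam.le h1]
  -- geometric decay of q
  set ρ : ℝ := (Real.sqrt σ)⁻¹ with hρ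
  have hσ0 : (0:ℝ) < σ := lt_trans one_pos hσ
  have hsq1 : 1 < Real.sqrt σ := by
    rw [show (1:ℝ) = Real.sqrt 1 by simp]
    exact Real.sqrt_lt_sqrt (by norm_num) hσ
  have hρ0 : 0 < ρ := by rw [hρ]; positivity
  have hρ1 : ρ < 1 := by rw [hρ, inv_lt_one_iff₀]; right; exact hsq1
  have hρsq : ρ^2 = σ⁻¹ := by
    rw [hρ, inv_pow, Real.sq_sqrt hσ0.le]
  set K : ℝ := Real.sqrt (2*lam*n/η₀) with hKdef
  have hK0 : 0 ≤ K := Real.sqrt_nonneg _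
  have hK2 : K^2 = 2*lam*n/η₀ := by rw [hKdef]; exact Real.sq_sqrt (by positivity)
  have hKρ : ∀ k, (K * ρ^k)^2 = 2*lam*n / η k := by
    intro k
    rw [mul_pow, hK2, ← pow_mul, mul_comm k 2, pow_mul, hρsq, hη]
    rw [inv_pow]
    field_simp
  have hq1g : ∀ k, ‖q1 (k+1)‖ ≤ K * ρ^k := by
    intro k
    exact le_of_sq_le_sq' (by rw [hKρ k]; exact hq1bd k) (norm_nonneg _) (by positivity)
  have hq2g : ∀ k, ‖q2 (k+1)‖ ≤ K * ρ^k := by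
    intro k
    exact le_of_sq_le_sq' (by rw [hKρ k]; exact hq2bd k) (norm_nonneg _) (by positivity)
  -- expressing v, w in terms of u and q
  have hveq : ∀ k, v (k+1) = q1 k + u (k+1) - q1 (k+1) := by
    intro k; rw [hq1 k]; abel
  have hweq : ∀ k, w (k+1) = q2 k + u (k+1) - q2 (k+1) := by
    intro k; rw [hq2 k]; abel
  -- step recursion: 2‖u(j+3)-u(j+2)‖ bound
  set C' : ℝ := C / η₀ with hC'
  have hC'0 : 0 ≤ C' := by positivity
  have hstep : ∀ j : ℕ, 2 * ‖u (j+3) - u (j+2)‖ ≤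
      C' * ρ^j * (‖u (j+3)‖ + 1) + 6 * K * ρ^j := by
    intro j
    have hT : ‖(u (j+3) - v (j+2) + q1 (j+2)) + (u (j+3) - w (j+2) + q2 (j+2))‖ ≤
        C * (‖u (j+3)‖ + 1) / η (j+2) := by
      rw [le_div_iff₀ (ηpos (j+2)), mul_comm]
      rw [← hgnorm (j+2)]
      exact hCb (j+2)
    have hA : u (j+3) - v (j+2) + q1 (j+2) =
        (u (j+3) - u (j+2)) + ((q1 (j+2) - q1 (j+1)) + q1 (j+2)) := by
      rw [show v (j+2) = q1 (j+1) + u (j+2) - q1 (j+2) from hveq (j+1)]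
      abel
    have hB : u (j+3) - w (j+2) + q2 (j+2) =
        (u (j+3) - u (j+2)) + ((q2 (j+2) - q2 (j+1)) + q2 (j+2)) := by
      rw [show w (j+2) = q2 (j+1) + u (j+2) - q2 (j+2) from hweq (j+1)]
      abel
    have hsum : (u (j+3) - u (j+2)) + (u (j+3) - u (j+2)) =
        ((u (j+3) - v (j+2) + q1 (j+2)) + (u (j+3) - w (j+2) + q2 (j+2)))
          - ((q1 (j+2) - q1 (j+1)) + q1 (j+2)) - ((q2 (j+2) - q2 (j+1)) + q2 (j+2)) := by
      rw [hA, hB]; abel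
    have h2n : ‖(u (j+3) - u (j+2)) + (u (j+3) - u (j+2))‖ = 2 * ‖u (j+3) - u (j+2)‖ := by
      rw [← two_smul ℝ (u (j+3) - u (j+2)), norm_smul]
      simp
    have htri : 2 * ‖u (j+3) - u (j+2)‖ ≤
        ‖(u (j+3) - v (j+2) + q1 (j+2)) + (u (j+3) - w (j+2) + q2 (j+2))‖
        + (2*‖q1 (j+2)‖ + ‖q1 (j+1)‖) + (2*‖q2 (j+2)‖ + ‖q2 (j+1)‖) := by
      rw [← h2n, hsum]
      have t1 := norm_sub_le (((u (j+3) - v (j+2) + q1 (j+2)) + (u (j+3) - w (j+2) + q2 (j+2)))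
          - ((q1 (j+2) - q1 (j+1)) + q1 (j+2))) ((q2 (j+2) - q2 (j+1)) + q2 (j+2))
      have t2 := norm_sub_le ((u (j+3) - v (j+2) + q1 (j+2)) + (u (j+3) - w (j+2) + q2 (j+2)))
          ((q1 (j+2) - q1 (j+1)) + q1 (j+2))
      have t3 : ‖(q1 (j+2) - q1 (j+1)) + q1 (j+2)‖ ≤ 2*‖q1 (j+2)‖ + ‖q1 (j+1)‖ := by
        calc ‖(q1 (j+2) - q1 (j+1)) + q1 (j+2)‖ ≤ ‖q1 (j+2) - q1 (j+1)‖ + ‖q1 (j+2)‖ :=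
              norm_add_le _ _
          _ ≤ (‖q1 (j+2)‖ + ‖q1 (j+1)‖) + ‖q1 (j+2)‖ := by
              have := norm_sub_le (q1 (j+2)) (q1 (j+1)); linarith
          _ = 2*‖q1 (j+2)‖ + ‖q1 (j+1)‖ := by ring
      have t4 : ‖(q2 (j+2) - q2 (j+1)) + q2 (j+2)‖ ≤ 2*‖q2 (j+2)‖ + ‖q2 (j+1)‖ := by
        calc ‖(q2 (j+2) - q2 (j+1)) + q2 (j+2)‖ ≤ ‖q2 (j+2) - q2 (j+1)‖ + ‖q2 (j+2)‖ :=
              norm_add_le _ _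
          _ ≤ (‖q2 (j+2)‖ + ‖q2 (j+1)‖) + ‖q2 (j+2)‖ := by
              have := norm_sub_le (q2 (j+2)) (q2 (j+1)); linarith
          _ = 2*‖q2 (j+2)‖ + ‖q2 (j+1)‖ := by ring
      linarith
    -- numeric bounds
    have hq1a : ‖q1 (j+2)‖ ≤ K * ρ^j := by
      have := hq1g (j+1)
      calc ‖q1 (j+2)‖ ≤ K * ρ^(j+1) := this
        _ ≤ K * ρ^j := by
            apply mul_le_mul_of_nonneg_left _ hK0
            exact pow_le_pow_of_le_one hρ0.le hρ1.le (Nat.le_succ j)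
    have hq1b : ‖q1 (j+1)‖ ≤ K * ρ^j := hq1g j
    have hq2a : ‖q2 (j+2)‖ ≤ K * ρ^j := by
      have := hq2g (j+1)
      calc ‖q2 (j+2)‖ ≤ K * ρ^(j+1) := this
        _ ≤ K * ρ^j := by
            apply mul_le_mul_of_nonneg_left _ hK0
            exact pow_le_pow_of_le_one hρ0.le hρ1.le (Nat.le_succ j)
    have hq2b : ‖q2 (j+1)‖ ≤ K * ρ^j := hq2g j
    have hCη : C * (‖u (j+3)‖ + 1) / η (j+2) ≤ C' * ρ^j * (‖u (j+3)‖ + 1) := by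
      rw [hη, hC']
      have hupos : (0:ℝ) < ‖u (j+3)‖ + 1 := by positivity
      rw [div_le_iff₀ (by positivity)]
      have hρj : ρ^(2*(j+2)) * σ^(j+2) = 1 := by
        rw [pow_mul, hρsq, inv_pow, inv_mul_cancel₀ (by positivity)]
      have h1 : ρ^(j+4) ≤ ρ^j := pow_le_pow_of_le_one hρ0.le hρ1.le (by omega)
      have key2 : (C/η₀) * ρ^(2*(j+2)) * (‖u (j+3)‖ + 1) * (η₀ * σ^(j+2)) =
          C * (‖u (j+3)‖ + 1) := by
        have e : (C/η₀) * ρ^(2*(j+2)) * (‖u (j+3)‖ + 1) * (η₀ * σ^(j+2)) =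
            C * (‖u (j+3)‖ + 1) * (ρ^(2*(j+2)) * σ^(j+2)) := by
          field_simp
        rw [e, hρj, mul_one]
      calc C * (‖u (j+3)‖ + 1) = (C/η₀) * ρ^(2*(j+2)) * (‖u (j+3)‖ + 1) * (η₀ * σ^(j+2)) :=
            key2.symm
        _ ≤ (C/η₀) * ρ^j * (‖u (j+3)‖ + 1) * (η₀ * σ^(j+2)) := by
            apply mul_le_mul_of_nonneg_right _ (by positivity)
            apply mul_le_mul_of_nonneg_right _ hupos.le
            apply mul_le_mul_of_nonneg_left _ (by positivity)
            calc ρ^(2*(j+2)) = ρ^(j+4) * ρ^j := by rw [← pow_add]; ring_nf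
              _ ≤ 1 * ρ^j := by
                  apply mul_le_mul_of_nonneg_right _ (by positivity)
                  exact pow_le_one₀ hρ0.le hρ1.le
              _ = ρ^j := one_mul _
    nlinarith [htri, hT, hCη]
  -- choose j₀ with C' * ρ^j₀ ≤ 1
  have hmono : ∀ {i j : ℕ}, i ≤ j → ρ^j ≤ ρ^i :=
    fun hij => pow_le_pow_of_le_one hρ0.le hρ1.le hij
  obtain ⟨j₀, hj₀⟩ : ∃ j₀ : ℕ, C' * ρ^j₀ ≤ 1 := by
    obtain ⟨j₀, hj⟩ := exists_pow_lt_of_lt_one (show (0:ℝ) < 1/(C'+1) by positivity) hρ1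
    refine ⟨j₀, ?_⟩
    rw [lt_div_iff₀ (by positivity)] at hj
    nlinarith [pow_nonneg hρ0.le j₀]
  set c : ℝ := C' + 1 with hc
  have hc0 : (0:ℝ) < c := by positivity
  set P : ℝ := 6*K/c with hP
  have hP0 : (0:ℝ) ≤ P := by positivity
  set m : ℕ → ℝ := fun k => ‖u k‖ + 1 with hm
  have hmnn : ∀ k, (0:ℝ) ≤ m k := fun k => by simp only [hm]; positivity
  have htr : ∀ j : ℕ, ‖u (j+3)‖ ≤ ‖u (j+2)‖ + ‖u (j+3) - u (j+2)‖ := by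
    intro j
    have h := norm_add_le (u (j+2)) (u (j+3) - u (j+2))
    simpa using h
  have hbstep : ∀ j, j₀ ≤ j → ‖u (j+3) - u (j+2)‖ ≤ C' * ρ^j * m (j+2) + 6*K*ρ^j := by
    intro j hj
    have h1 := hstep j
    have h2 := htr j
    have h3 : C' * ρ^j ≤ 1 := le_trans (mul_le_mul_of_nonneg_left (hmono hj) hC'0) hj₀
    have h4 : (0:ℝ) ≤ C' * ρ^j := by positivity
    have h5 : (0:ℝ) ≤ ‖u (j+3) - u (j+2)‖ := norm_nonneg _
    simp only [hm]
    nlinarith [mul_le_mul_of_nonneg_right h3 h5,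
      mul_le_mul_of_nonneg_left h2 h4]
  have hMstep : ∀ j, j₀ ≤ j → m (j+3) + P ≤ (1 + c*ρ^j) * (m (j+2) + P) := by
    intro j hj
    have h1 := hbstep j hj
    have h2 := htr j
    have hcP : c * P = 6*K := by rw [hP]; field_simp
    have hρj : (0:ℝ) ≤ ρ^j := by positivity
    have hCc : C' ≤ c := by rw [hc]; linarith
    have hmn := hmnn (j+2)
    have hmul : (C' * ρ^j) * m (j+2) ≤ (c * ρ^j) * m (j+2) :=
      mul_le_mul_of_nonneg_right (mul_le_mul_of_nonneg_right hCc hρj) hmn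
    have hPmul : (0:ℝ) ≤ c * ρ^j * P := by positivity
    simp only [hm] at h1 h2 hmn hmul ⊢
    nlinarith [hcP]
  set M : ℕ → ℝ := fun j => m (j+2) + P with hM
  have hMnn : ∀ j, (0:ℝ) ≤ M j := fun j => add_nonneg (hmnn (j+2)) hP0
  have hMind : ∀ i : ℕ, M (j₀ + i) ≤ M j₀ * Real.exp (c * ∑ l ∈ Finset.range i, ρ^(j₀+l)) := by
    intro i
    induction i with
    | zero => simp
    | succ i ih =>
      have hstep' : M (j₀ + i + 1) ≤ (1 + c*ρ^(j₀+i)) * M (j₀ + i) := by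
        have := hMstep (j₀ + i) (Nat.le_add_right _ _)
        simpa [hM, show j₀ + i + 3 = (j₀+i+1)+2 by omega] using this
      have h1 : (1 + c*ρ^(j₀+i)) * M (j₀ + i) ≤
          (1 + c*ρ^(j₀+i)) * (M j₀ * Real.exp (c * ∑ l ∈ Finset.range i, ρ^(j₀+l))) := by
        apply mul_le_mul_of_nonneg_left ih
        have : (0:ℝ) ≤ c*ρ^(j₀+i) := by positivity
        linarith
      have h2 : (1 + c*ρ^(j₀+i)) ≤ Real.exp (c*ρ^(j₀+i)) := by
        have := Real.add_one_le_exp (c*ρ^(j₀+i))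
        linarith
      have h3 : (1 + c*ρ^(j₀+i)) * (M j₀ * Real.exp (c * ∑ l ∈ Finset.range i, ρ^(j₀+l))) ≤
          Real.exp (c*ρ^(j₀+i)) * (M j₀ * Real.exp (c * ∑ l ∈ Finset.range i, ρ^(j₀+l))) := by
        apply mul_le_mul_of_nonneg_right h2
        positivity
      have h4 : Real.exp (c*ρ^(j₀+i)) * (M j₀ * Real.exp (c * ∑ l ∈ Finset.range i, ρ^(j₀+l))) =
          M j₀ * Real.exp (c * ∑ l ∈ Finset.range (i+1), ρ^(j₀+l)) := by
        rw [Finset.sum_range_succ, mul_add, Real.exp_add]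
        ring
      calc M (j₀ + (i+1)) = M (j₀ + i + 1) := by rw [show j₀ + (i+1) = j₀ + i + 1 by omega]
        _ ≤ (1 + c*ρ^(j₀+i)) * M (j₀ + i) := hstep'
        _ ≤ _ := h1
        _ ≤ _ := h3
        _ = _ := h4
  set Mstar : ℝ := M j₀ * Real.exp (c * (1-ρ)⁻¹) with hMstar
  have hMstar0 : (0:ℝ) ≤ Mstar := by
    rw [hMstar]; positivity
  have hMbd : ∀ j, j₀ ≤ j → M j ≤ Mstar := by
    intro j hj
    obtain ⟨i, rfl⟩ := le_iff_exists_add.mp hj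
    refine le_trans (hMind i) ?_
    rw [hMstar]
    apply mul_le_mul_of_nonneg_left _ (hMnn j₀)
    rw [Real.exp_le_exp]
    apply mul_le_mul_of_nonneg_left _ hc0.le
    calc ∑ l ∈ Finset.range i, ρ^(j₀+l) ≤ ∑ l ∈ Finset.range i, ρ^l :=
          Finset.sum_le_sum (fun l _ => hmono (Nat.le_add_left _ _))
      _ ≤ (1-ρ)⁻¹ := geom_sum_le' hρ0.le hρ1 i
  set B : ℝ := C' * Mstar + 6*K with hB
  have hbB : ∀ j, j₀ ≤ j → ‖u (j+3) - u (j+2)‖ ≤ B * ρ^j := by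
    intro j hj
    have h1 := hbstep j hj
    have h2 : m (j+2) ≤ Mstar := by
      have := hMbd j hj
      simp only [hM] at this
      linarith
    have h4 : (0:ℝ) ≤ C' * ρ^j := by positivity
    have h5 : (0:ℝ) ≤ ρ^j := by positivity
    rw [hB]
    nlinarith [mul_le_mul_of_nonneg_left h2 h4]
  -- summability and Cauchy
  have hsum : Summable (fun k => dist (u k) (u (k+1))) := by
    rw [← summable_nat_add_iff (j₀+3)]
    apply Summable.of_nonneg_of_le (fun i => dist_nonneg) (fun i => ?_)
      ((summable_geometric_of_lt_one hρ0.le hρ1).mul_left (B*ρ^(j₀+1)))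
    have h := hbB (i+j₀+1) (by omega)
    have e1 : i + (j₀+3) = (i+j₀+1)+2 := by omega
    have e2 : i + (j₀+3) + 1 = (i+j₀+1)+3 := by omega
    rw [e1, dist_eq_norm, norm_sub_rev]
    rw [show (i+j₀+1)+2+1 = (i+j₀+1)+3 by omega]
    refine le_trans h (le_of_eq ?_)
    rw [show i+j₀+1 = (j₀+1)+i by omega, pow_add]
    ring
  have hcauchy : CauchySeq u := cauchySeq_of_summable_dist hsum
  obtain ⟨uh, huh⟩ := cauchySeq_tendsto_of_complete hcauchy
  -- limits of q1, q2
  have hq1t : Tendsto q1 atTop (nhds 0) := by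
    rw [← tendsto_add_atTop_iff_nat 1]
    rw [tendsto_zero_iff_norm_tendsto_zero]
    apply squeeze_zero (fun k => norm_nonneg _) (fun k => hq1g k)
    have := tendsto_pow_atTop_nhds_zero_of_lt_one hρ0.le hρ1
    simpa using this.const_mul K
  have hq2t : Tendsto q2 atTop (nhds 0) := by
    rw [← tendsto_add_atTop_iff_nat 1]
    rw [tendsto_zero_iff_norm_tendsto_zero]
    apply squeeze_zero (fun k => norm_nonneg _) (fun k => hq2g k)
    have := tendsto_pow_atTop_nhds_zero_of_lt_one hρ0.le hρ1
    simpa using this.const_mul K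
  have hut1 : Tendsto (fun k => u (k+1)) atTop (nhds uh) :=
    (tendsto_add_atTop_iff_nat 1).mpr huh
  have hq1t1 : Tendsto (fun k => q1 (k+1)) atTop (nhds 0) :=
    (tendsto_add_atTop_iff_nat 1).mpr hq1t
  have hq2t1 : Tendsto (fun k => q2 (k+1)) atTop (nhds 0) :=
    (tendsto_add_atTop_iff_nat 1).mpr hq2t
  have hvt : Tendsto v atTop (nhds uh) := by
    rw [← tendsto_add_atTop_iff_nat 1]
    have e : (fun k => v (k+1)) = fun k => q1 k + u (k+1) - q1 (k+1) := funext hveq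
    rw [e]
    simpa using (hq1t.add hut1).sub hq1t1
  have hwt : Tendsto w atTop (nhds uh) := by
    rw [← tendsto_add_atTop_iff_nat 1]
    have e : (fun k => w (k+1)) = fun k => q2 k + u (k+1) - q2 (k+1) := funext hweq
    rw [e]
    simpa using (hq2t.add hut1).sub hq2t1
  exact ⟨uh, huh, hvt, hwt, hq1t, hq2t⟩
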